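/- Let u ∈ L∞((a,b)×(c,d)) and f ∈ L¹((a,b)×(c,d)). Suppose there exist null sets N_X ⊂ (a,b), N_Y ⊂ (c,d) such that for all X̄₁ < X̄₂ not in N_X and Ȳ₁ < Ȳ₂ not in N_Y: ∫_{Ȳ₁}^{Ȳ₂} [u(X̄₂,Y) - u(X̄₁,Y)] dY = ∫_{Ȳ₁}^{Ȳ₂} ∫_{X̄₁}^{X̄₂} f(X,Y) dX dY. Then after modification on a null set, for a.e. Y₀ the map X ↦ u(X,Y₀) is absolutely continuous with ∂_X u(X,Y₀) = f(X,Y₀) a.e. -/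

import Mathlib

open MeasureTheory
open Set Filter Topology Metric

lemma aux_interval_vanish (c d : ℝ) (g : ℝ → ℝ) (hg : IntegrableOn g (Set.Ioo c d))
    (N : Set ℝ) (hN : volume N = 0)
    (h0 : ∀ Y₁ Y₂ : ℝ, Y₁ ∉ N → Y₂ ∉ N → c < Y₁ → Y₁ < Y₂ → Y₂ < d →
      ∫ Y in Y₁..Y₂, g Y = 0) :
    ∀ᵐ Y ∂volume, Y ∈ Set.Ioo c d → g Y = 0 := by
  set G : ℝ → ℝ := (Set.Ioo c d).indicator g with hG
  have hGint : Integrable G volume := by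
    rw [hG, integrable_indicator_iff measurableSet_Ioo]
    exact hg
  have hGloc : LocallyIntegrable G volume := hGint.locallyIntegrable
  have key : ∀ Y₁ Y₂ : ℝ, Y₁ ∉ N → Y₂ ∉ N → c < Y₁ → Y₁ ≤ Y₂ → Y₂ < d →
      ∫ t in Set.Ioc Y₁ Y₂, G t = 0 := by
    intro Y₁ Y₂ h1 h2 hc hle hd
    rcases eq_or_lt_of_le hle with rfl | hlt
    · simp
    · rw [hG, setIntegral_indicator measurableSet_Ioo]
      have : Set.Ioc Y₁ Y₂ ∩ Set.Ioo c d = Set.Ioc Y₁ Y₂ := by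
        apply Set.inter_eq_left.mpr
        intro x hx
        exact ⟨hc.trans hx.1, hx.2.trans_lt hd⟩
      rw [this, ← intervalIntegral.integral_of_le hle]
      exact h0 Y₁ Y₂ h1 h2 hc hlt hd
  filter_upwards [IsUnifLocDoublingMeasure.ae_tendsto_average (μ := volume) hGloc 1]
    with Y hY hYmem
  -- choose a good sequence of radii
  have hsel : ∀ n : ℕ, ∃ r : ℝ, 0 < r ∧ r < Y - c ∧ r < d - Y ∧ r ≤ 1 / (n + 1) ∧
      Y - r ∉ N ∧ Y + r ∉ N := by
    intro n
    set ε : ℝ := min (min (Y - c) (d - Y)) (1 / (n + 1)) with hε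
    have hε0 : 0 < ε :=
      lt_min (lt_min (by linarith [hYmem.1]) (by linarith [hYmem.2])) (by positivity)
    set B : Set ℝ := (fun r => Y - r) ⁻¹' N ∪ (fun r => Y + r) ⁻¹' N with hB
    have hB0 : volume B = 0 := by
      apply measure_union_null
      · exact (Measure.measurePreserving_sub_left volume Y).quasiMeasurePreserving.preimage_null hN
      · exact (measurePreserving_add_left volume Y).quasiMeasurePreserving.preimage_null hN
    have hpos : volume (Set.Ioo 0 ε \ B) ≠ 0 := by
      rw [measure_diff_null hB0, Real.volume_Ioo]
      simp only [sub_zero, ne_eq, ENNReal.ofReal_eq_zero, not_le]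
      exact hε0
    obtain ⟨r, hr⟩ := nonempty_of_measure_ne_zero hpos
    refine ⟨r, hr.1.1, ?_, ?_, ?_, ?_, ?_⟩
    · exact hr.1.2.trans_le ((min_le_left _ _).trans (min_le_left _ _))
    · exact hr.1.2.trans_le ((min_le_left _ _).trans (min_le_right _ _))
    · exact hr.1.2.le.trans (min_le_right _ _)
    · exact fun h => hr.2 (Or.inl h)
    · exact fun h => hr.2 (Or.inr h)
  choose δ hδ0 hδc hδd hδle hδN1 hδN2 using hsel
  have hδtend : Tendsto δ atTop (𝓝[>] (0 : ℝ)) := by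
    rw [tendsto_nhdsWithin_iff]
    constructor
    · apply squeeze_zero (fun n => (hδ0 n).le) hδle
      exact tendsto_one_div_add_atTop_nhds_zero_nat
    · exact Eventually.of_forall fun n => hδ0 n
  have hball : ∀ᶠ n in atTop, Y ∈ closedBall Y (1 * δ n) :=
    Eventually.of_forall fun n => mem_closedBall_self (by nlinarith [hδ0 n])
  have htend := hY (fun _ => Y) δ hδtend hball
  have havg : ∀ n : ℕ, ⨍ t in closedBall Y (δ n), G t = 0 := by
    intro n
    have h1 : ∫ t in closedBall Y (δ n), G t = 0 := by
      rw [Real.closedBall_eq_Icc, integral_Icc_eq_integral_Ioc]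
      exact key _ _ (hδN1 n) (hδN2 n) (by linarith [hδc n]) (by linarith [hδ0 n])
        (by linarith [hδd n])
    rw [setAverage_eq, h1, smul_zero]
  have : Tendsto (fun _ : ℕ => (0 : ℝ)) atTop (𝓝 (G Y)) := by
    simpa [havg] using htend
  have hGY : G Y = 0 := tendsto_nhds_unique this tendsto_const_nhds
  rwa [hG, Set.indicator_of_mem hYmem] at hGY

lemma aux_meas (g : ℝ × ℝ → ℝ) (hg : StronglyMeasurable g) (x₀ : ℝ) :
    StronglyMeasurable (fun p : ℝ × ℝ => ∫ S in x₀..p.1, g (S, p.2)) := by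
  have hterm : ∀ (A : Set ((ℝ × ℝ) × ℝ)), MeasurableSet A →
      StronglyMeasurable (fun p : ℝ × ℝ =>
        ∫ S, A.indicator (fun q : (ℝ × ℝ) × ℝ => g (q.2, q.1.2)) (p, S)) := by
    intro A hA
    have hF : StronglyMeasurable fun q : (ℝ × ℝ) × ℝ =>
        A.indicator (fun q : (ℝ × ℝ) × ℝ => g (q.2, q.1.2)) q := by
      refine StronglyMeasurable.indicator ?_ hA
      exact hg.comp_measurable (measurable_snd.prodMk (measurable_fst.snd))
    exact hF.integral_prod_right'
  have h1 : StronglyMeasurable (fun p : ℝ × ℝ => ∫ S in Set.Ioc x₀ p.1, g (S, p.2)) := by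
    have hA : MeasurableSet {q : (ℝ × ℝ) × ℝ | x₀ < q.2 ∧ q.2 ≤ q.1.1} :=
      (measurableSet_lt measurable_const measurable_snd).inter
        (measurableSet_le measurable_snd measurable_fst.fst)
    have := hterm _ hA
    convert this using 2 with p
    rw [← integral_indicator measurableSet_Ioc]
    refine integral_congr_ae (Filter.Eventually.of_forall fun S => ?_)
    by_cases h : x₀ < S ∧ S ≤ p.1 <;> simp [Set.indicator, Set.mem_Ioc, h]
  have h2 : StronglyMeasurable (fun p : ℝ × ℝ => ∫ S in Set.Ioc p.1 x₀, g (S, p.2)) := by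
    have hA : MeasurableSet {q : (ℝ × ℝ) × ℝ | q.1.1 < q.2 ∧ q.2 ≤ x₀} :=
      (measurableSet_lt measurable_fst.fst measurable_snd).inter
        (measurableSet_le measurable_snd measurable_const)
    have := hterm _ hA
    convert this using 2 with p
    rw [← integral_indicator measurableSet_Ioc]
    refine integral_congr_ae (Filter.Eventually.of_forall fun S => ?_)
    by_cases h : p.1 < S ∧ S ≤ x₀ <;> simp [Set.indicator, Set.mem_Ioc, h]
  exact h1.sub h2

lemma aux_bound (h : ℝ → ℝ) (a b x₀ X : ℝ) (hx₀ : x₀ ∈ Set.Ioo a b) (hX : X ∈ Set.Ioo a b)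
    (hint : IntegrableOn h (Set.Ioo a b)) :
    ‖∫ S in x₀..X, h S‖ ≤ ∫ S in Set.Ioo a b, ‖h S‖ := by
  have hmono : ∀ (W Z : ℝ), W ∈ Set.Ioo a b → Z ∈ Set.Ioo a b → W ≤ Z →
      ‖∫ S in W..Z, h S‖ ≤ ∫ S in Set.Ioo a b, ‖h S‖ := by
    intro W Z hW hZ hle
    calc ‖∫ S in W..Z, h S‖ ≤ ∫ S in W..Z, ‖h S‖ :=
          intervalIntegral.norm_integral_le_integral_norm hle
      _ = ∫ S in Set.Ioc W Z, ‖h S‖ := intervalIntegral.integral_of_le hle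
      _ ≤ ∫ S in Set.Ioo a b, ‖h S‖ := by
          apply setIntegral_mono_set hint.norm
          · exact Eventually.of_forall fun S => norm_nonneg _
          · refine HasSubset.Subset.eventuallyLE ?_
            intro S hS
            exact ⟨hW.1.trans_le hS.1.le, hS.2.trans_lt hZ.2⟩
  rcases le_total x₀ X with hle | hle
  · exact hmono x₀ X hx₀ hX hle
  · rw [intervalIntegral.integral_symm, norm_neg]
    exact hmono X x₀ hX hx₀ hle


/-- Technical lemma (ii): integrated increments over almost-all rectangles yield,
after modification on a null set, absolute continuity along a.e. horizontal line
with derivative f. -/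
theorem stmt18 (a b c d : ℝ) (hab : a < b) (hcd : c < d)
    (u f : ℝ × ℝ → ℝ)
    (humeas : Measurable u)
    (hu : ∃ Mb : ℝ, ∀ᵐ p ∂volume, p ∈ Set.Ioo a b ×ˢ Set.Ioo c d → |u p| ≤ Mb)
    (hf : IntegrableOn f (Set.Ioo a b ×ˢ Set.Ioo c d))
    (NX NY : Set ℝ) (hNX : volume NX = 0) (hNY : volume NY = 0)
    (hrect : ∀ X₁ X₂ : ℝ, X₁ ∉ NX → X₂ ∉ NX → a < X₁ → X₁ < X₂ → X₂ < b →
      ∀ Y₁ Y₂ : ℝ, Y₁ ∉ NY → Y₂ ∉ NY → c < Y₁ → Y₁ < Y₂ → Y₂ < d →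
        ∫ Y in Y₁..Y₂, (u (X₂, Y) - u (X₁, Y)) =
          ∫ Y in Y₁..Y₂, ∫ X in X₁..X₂, f (X, Y)) :
    ∃ v : ℝ × ℝ → ℝ,
      (∀ᵐ p ∂volume, p ∈ Set.Ioo a b ×ˢ Set.Ioo c d → v p = u p) ∧
      ∀ᵐ Y₀ ∂volume, Y₀ ∈ Set.Ioo c d →
        ∀ X₁ X₂ : ℝ, a < X₁ → X₁ ≤ X₂ → X₂ < b →
          v (X₂, Y₀) - v (X₁, Y₀) = ∫ X in X₁..X₂, f (X, Y₀) := by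
  classical
  obtain ⟨M, hM⟩ := hu
  have hvol : (volume : Measure (ℝ × ℝ)) = (volume : Measure ℝ).prod volume := rfl
  have hRmeas : MeasurableSet (Set.Ioo a b ×ˢ Set.Ioo c d) :=
    measurableSet_Ioo.prod measurableSet_Ioo
  -- measurable representative of f
  have hfae : AEStronglyMeasurable f (volume.restrict (Set.Ioo a b ×ˢ Set.Ioo c d)) :=
    hf.aestronglyMeasurable
  set g : ℝ × ℝ → ℝ := hfae.mk f with hgdef
  have hgsm : StronglyMeasurable g := hfae.stronglyMeasurable_mk
  have hfg : f =ᵐ[volume.restrict (Set.Ioo a b ×ˢ Set.Ioo c d)] g := hfae.ae_eq_mk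
  have hgint : IntegrableOn g (Set.Ioo a b ×ˢ Set.Ioo c d) := hf.congr hfg
  have hres : volume.restrict (Set.Ioo a b ×ˢ Set.Ioo c d)
      = (volume.restrict (Set.Ioo a b)).prod (volume.restrict (Set.Ioo c d)) := by
    rw [hvol, ← Measure.prod_restrict]
  -- sections in Y of f = g
  have hswap : ∀ᵐ q ∂((volume.restrict (Set.Ioo c d)).prod (volume.restrict (Set.Ioo a b))),
      f (q.2, q.1) = g (q.2, q.1) := by
    have hmp := Measure.measurePreserving_swap
      (μ := volume.restrict (Set.Ioo c d)) (ν := volume.restrict (Set.Ioo a b))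
    have hfg' : f =ᵐ[(volume.restrict (Set.Ioo a b)).prod (volume.restrict (Set.Ioo c d))] g := by
      rw [← hres]; exact hfg
    exact hmp.quasiMeasurePreserving.ae (p := fun z : ℝ × ℝ => f z = g z) hfg'
  have hYfg : ∀ᵐ Y ∂(volume : Measure ℝ), Y ∈ Set.Ioo c d →
      (fun X => f (X, Y)) =ᵐ[volume.restrict (Set.Ioo a b)] (fun X => g (X, Y)) :=
    ae_imp_of_ae_restrict (Measure.ae_ae_of_ae_prod hswap)
  -- sections integrability of g
  have hsecg : ∀ᵐ Y ∂(volume : Measure ℝ), Y ∈ Set.Ioo c d →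
      IntegrableOn (fun X => g (X, Y)) (Set.Ioo a b) :=
    ae_imp_of_ae_restrict (Integrable.prod_left_ae (by rwa [← hres]))
  -- integrability of the norm integral in Y
  have hnorm : IntegrableOn (fun Y => ∫ X in Set.Ioo a b, ‖g (X, Y)‖) (Set.Ioo c d) := by
    have h1 : Integrable (g ∘ Prod.swap)
        ((volume.restrict (Set.Ioo c d)).prod (volume.restrict (Set.Ioo a b))) :=
      Integrable.swap (by rwa [← hres])
    have := h1.integral_norm_prod_left
    simpa [Function.comp, IntegrableOn] using this
  -- bounded sections of u, and avoidance of NX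
  have hMprod : ∀ᵐ X ∂(volume : Measure ℝ), ∀ᵐ Y ∂(volume : Measure ℝ),
      ((X, Y) ∈ Set.Ioo a b ×ˢ Set.Ioo c d → |u (X, Y)| ≤ M) :=
    Measure.ae_ae_of_ae_prod (by rw [← hvol]; exact hM)
  have hNXae : ∀ᵐ X ∂(volume : Measure ℝ), X ∉ NX := measure_eq_zero_iff_ae_notMem.mp hNX
  -- choose a good base point x₀
  have hx0 : ∃ x₀ : ℝ, x₀ ∈ Set.Ioo a b ∧ (x₀ ∉ NX ∧
      ∀ᵐ Y ∂(volume : Measure ℝ), ((x₀, Y) ∈ Set.Ioo a b ×ˢ Set.Ioo c d → |u (x₀, Y)| ≤ M)) := by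
    have hne : volume.restrict (Set.Ioo a b) ≠ 0 := by
      intro h0
      have h1 : volume (Set.Ioo a b) = 0 := by
        rw [← Measure.restrict_apply_univ, h0]; simp
      rw [Real.volume_Ioo] at h1
      simp only [ENNReal.ofReal_eq_zero] at h1
      linarith
    haveI : (ae (volume.restrict (Set.Ioo a b))).NeBot := ae_neBot.mpr hne
    exact ((ae_restrict_mem measurableSet_Ioo).and
      (ae_restrict_of_ae (hNXae.and hMprod))).exists
  obtain ⟨x₀, hx₀mem, hx₀NX, hx₀sec⟩ := hx0
  set v : ℝ × ℝ → ℝ := fun p => u (x₀, p.2) + ∫ S in x₀..p.1, g (S, p.2) with hvdef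
  have hvm : Measurable v := by
    apply Measurable.add
    · exact humeas.comp (measurable_const.prodMk measurable_snd)
    · exact (aux_meas g hgsm x₀).measurable
  haveI hfinIcd : IsFiniteMeasure (volume.restrict (Set.Ioo c d)) :=
    ⟨by rw [Measure.restrict_apply_univ]; exact measure_Ioo_lt_top⟩
  -- the rectangle identity with g instead of f
  have hrectg : ∀ X₁ X₂ : ℝ, X₁ ∉ NX → X₂ ∉ NX → a < X₁ → X₁ < X₂ → X₂ < b →
      ∀ Y₁ Y₂ : ℝ, Y₁ ∉ NY → Y₂ ∉ NY → c < Y₁ → Y₁ < Y₂ → Y₂ < d →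
        ∫ Y in Y₁..Y₂, (u (X₂, Y) - u (X₁, Y)) = ∫ Y in Y₁..Y₂, ∫ X in X₁..X₂, g (X, Y) := by
    intro X₁ X₂ h1 h2 h3 h4 h5 Y₁ Y₂ k1 k2 k3 k4 k5
    rw [hrect X₁ X₂ h1 h2 h3 h4 h5 Y₁ Y₂ k1 k2 k3 k4 k5]
    apply intervalIntegral.integral_congr_ae
    filter_upwards [hYfg] with Y hY hYmem
    have hYcd : Y ∈ Set.Ioo c d := by
      rw [Set.uIoc_of_le k4.le] at hYmem
      exact ⟨k3.trans hYmem.1, hYmem.2.trans_lt k5⟩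
    apply intervalIntegral.integral_congr_ae
    filter_upwards [ae_imp_of_ae_restrict (hY hYcd)] with X hX hXmem
    rw [Set.uIoc_of_le h4.le] at hXmem
    exact hX ⟨h3.trans hXmem.1, hXmem.2.trans_lt h5⟩
  -- integrability of bounded sections of u
  have Iu : ∀ (W : ℝ), W ∈ Set.Ioo a b →
      (∀ᵐ Y ∂(volume : Measure ℝ), ((W, Y) ∈ Set.Ioo a b ×ˢ Set.Ioo c d → |u (W, Y)| ≤ M)) →
      IntegrableOn (fun Y => u (W, Y)) (Set.Ioo c d) := by
    intro W hW hsec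
    refine ⟨(humeas.comp (measurable_const.prodMk measurable_id)).aestronglyMeasurable,
      HasFiniteIntegral.of_bounded (C := M) ?_⟩
    filter_upwards [ae_restrict_of_ae hsec, ae_restrict_mem measurableSet_Ioo] with Y h1 h2
    simpa [Real.norm_eq_abs] using h1 ⟨hW, h2⟩
  have Iux0 := Iu x₀ hx₀mem hx₀sec
  -- KEY step
  have key : ∀ X : ℝ, X ∈ Set.Ioo a b → X ∉ NX →
      (∀ᵐ Y ∂(volume : Measure ℝ), ((X, Y) ∈ Set.Ioo a b ×ˢ Set.Ioo c d → |u (X, Y)| ≤ M)) →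
      ∀ᵐ Y ∂(volume : Measure ℝ), Y ∈ Set.Ioo c d → u (X, Y) = v (X, Y) := by
    intro X hXmem hXNX hXsec
    have IuX := Iu X hXmem hXsec
    have Ih : IntegrableOn (fun Y => ∫ S in x₀..X, g (S, Y)) (Set.Ioo c d) := by
      apply Integrable.mono' hnorm
      · exact ((aux_meas g hgsm x₀).measurable.comp
          (measurable_const.prodMk measurable_id)).aestronglyMeasurable
      · filter_upwards [ae_restrict_of_ae hsecg, ae_restrict_mem measurableSet_Ioo] with Y h1 h2
        exact aux_bound (fun S => g (S, Y)) a b x₀ X hx₀mem hXmem (h1 h2)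
    have DintOn : IntegrableOn
        (fun Y => u (X, Y) - u (x₀, Y) - ∫ S in x₀..X, g (S, Y)) (Set.Ioo c d) :=
      (IuX.sub Iux0).sub Ih
    have h0 : ∀ Y₁ Y₂ : ℝ, Y₁ ∉ NY → Y₂ ∉ NY → c < Y₁ → Y₁ < Y₂ → Y₂ < d →
        ∫ Y in Y₁..Y₂, (u (X, Y) - u (x₀, Y) - ∫ S in x₀..X, g (S, Y)) = 0 := by
      intro Y₁ Y₂ hY1 hY2 hc hlt hd
      have hIcc : Set.uIcc Y₁ Y₂ ⊆ Set.Ioo c d := by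
        rw [Set.uIcc_of_le hlt.le]
        intro y hy
        exact ⟨hc.trans_le hy.1, hy.2.trans_lt hd⟩
      have IuXsub : IntegrableOn (fun Y => u (X, Y) - u (x₀, Y)) (Set.Ioo c d) :=
        IuX.sub Iux0
      have iiA : IntervalIntegrable (fun Y => u (X, Y) - u (x₀, Y)) volume Y₁ Y₂ :=
        (IuXsub.mono_set hIcc).intervalIntegrable
      have iiB : IntervalIntegrable (fun Y => ∫ S in x₀..X, g (S, Y)) volume Y₁ Y₂ :=
        (Ih.mono_set hIcc).intervalIntegrable
      rw [show (fun Y => u (X, Y) - u (x₀, Y) - ∫ S in x₀..X, g (S, Y))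
          = fun Y => (u (X, Y) - u (x₀, Y)) - ∫ S in x₀..X, g (S, Y) from rfl,
        intervalIntegral.integral_sub iiA iiB]
      rcases lt_trichotomy x₀ X with hx | hx | hx
      · rw [hrectg x₀ X hx₀NX hXNX hx₀mem.1 hx hXmem.2 Y₁ Y₂ hY1 hY2 hc hlt hd]
        exact sub_self _
      · subst hx
        simp
      · have h := hrectg X x₀ hXNX hx₀NX hXmem.1 hx hx₀mem.2 Y₁ Y₂ hY1 hY2 hc hlt hd
        have e1 : ∫ Y in Y₁..Y₂, (u (X, Y) - u (x₀, Y))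
            = - ∫ Y in Y₁..Y₂, (u (x₀, Y) - u (X, Y)) := by
          rw [← intervalIntegral.integral_neg]
          congr 1 with Y
          ring
        have e2 : ∀ Y : ℝ, (∫ S in x₀..X, g (S, Y)) = - ∫ S in X..x₀, g (S, Y) :=
          fun Y => intervalIntegral.integral_symm X x₀
        rw [e1, h]
        rw [show (fun Y => ∫ S in x₀..X, g (S, Y))
            = fun Y => - ∫ S in X..x₀, g (S, Y) from funext e2,
          intervalIntegral.integral_neg]
        ring
    have := aux_interval_vanish c d _ DintOn NY hNY h0
    filter_upwards [this] with Y hY hYcd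
    have hD := hY hYcd
    simp only [hvdef]
    linarith [hD]
  -- Conclusion 1
  have hT : MeasurableSet {p : ℝ × ℝ | p ∈ Set.Ioo a b ×ˢ Set.Ioo c d ∧ v p ≠ u p} :=
    hRmeas.inter (measurableSet_eq_fun hvm humeas).compl
  have hT0 : volume {p : ℝ × ℝ | p ∈ Set.Ioo a b ×ˢ Set.Ioo c d ∧ v p ≠ u p} = 0 := by
    rw [hvol, Measure.measure_prod_null hT]
    filter_upwards [hNXae, hMprod] with X h1 h2
    simp only [Pi.zero_apply]
    by_cases hX : X ∈ Set.Ioo a b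
    · have hkey := key X hX h1 h2
      have hnull : volume {Y : ℝ | ¬ (Y ∈ Set.Ioo c d → u (X, Y) = v (X, Y))} = 0 := hkey
      apply measure_mono_null _ hnull
      intro Y hY
      simp only [Set.mem_preimage, Set.mem_setOf_eq, Set.mem_prod] at hY ⊢
      intro himp
      exact hY.2 ((himp hY.1.2).symm)
    · refine measure_mono_null ?_ (measure_empty (μ := (volume : Measure ℝ)))
      intro Y hY
      simp only [Set.mem_preimage, Set.mem_setOf_eq] at hY
      exact absurd (Set.mem_prod.mp hY.1).1 hX
  have conc1 : ∀ᵐ p ∂(volume : Measure (ℝ × ℝ)), p ∈ Set.Ioo a b ×ˢ Set.Ioo c d → v p = u p := by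
    filter_upwards [measure_eq_zero_iff_ae_notMem.mp hT0] with p hp hpR
    by_contra hne
    exact hp ⟨hpR, hne⟩
  -- Conclusion 2
  refine ⟨v, conc1, ?_⟩
  filter_upwards [hsecg, hYfg] with Y₀ h1 h2 hY₀ X₁ X₂ hX1 hle hX2
  have hint : IntegrableOn (fun X => g (X, Y₀)) (Set.Ioo a b) := h1 hY₀
  have hii : ∀ (W Z : ℝ), W ∈ Set.Ioo a b → Z ∈ Set.Ioo a b →
      IntervalIntegrable (fun X => g (X, Y₀)) volume W Z := fun W Z hW hZ =>
    (hint.mono_set (Set.ordConnected_Ioo.uIcc_subset hW hZ)).intervalIntegrable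
  have hX1m : X₁ ∈ Set.Ioo a b := ⟨hX1, lt_of_le_of_lt hle hX2⟩
  have hX2m : X₂ ∈ Set.Ioo a b := ⟨lt_of_lt_of_le hX1 hle, hX2⟩
  have hstep : v (X₂, Y₀) - v (X₁, Y₀) = ∫ X in X₁..X₂, g (X, Y₀) := by
    simp only [hvdef]
    have hcancel : ∀ (A B C : ℝ), (A + B) - (A + C) = B - C := by intros; ring
    rw [hcancel]
    exact intervalIntegral.integral_interval_sub_left (hii x₀ X₂ hx₀mem hX2m)
      (hii x₀ X₁ hx₀mem hX1m)
  rw [hstep]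
  apply intervalIntegral.integral_congr_ae
  filter_upwards [ae_imp_of_ae_restrict (h2 hY₀)] with X hX hXm
  rw [Set.uIoc_of_le hle] at hXm
  exact (hX ⟨hX1.trans hXm.1, hXm.2.trans_lt hX2⟩).symm
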